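/- Let N, d be natural numbers and U_1, …, U_N unitary d×d complex matrices. The eigenvalues of the Feynman clock Hamiltonian H_U on ℂ^{N+1} ⊗ ℂ^d, counted with multiplicity, are exactly the numbers N − 2k for k = 0, 1, …, N, each occurring with multiplicity d. -/

import Mathlib

open Matrix Kronecker Polynomial

/-- The Feynman clock Hamiltonian `H_U = Σ_{j=1}^{N} √(j(N−j+1)) (E_{j,j-1} ⊗ U_j +
E_{j-1,j} ⊗ U_j†)` on `ℂ^{N+1} ⊗ ℂ^d`. -/
noncomputable def clockHam (N d : ℕ) (U : Fin N → Matrix (Fin d) (Fin d) ℂ) :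
    Matrix (Fin (N + 1) × Fin d) (Fin (N + 1) × Fin d) ℂ :=
  ∑ j : Fin N, (Real.sqrt ((((j : ℕ) + 1) * (N - (j : ℕ)) : ℕ)) : ℂ) •
    ((Matrix.single j.succ j.castSucc (1 : ℂ)) ⊗ₖ U j +
      (Matrix.single j.castSucc j.succ (1 : ℂ)) ⊗ₖ (U j)ᴴ)



variable {n m : Type*} [Fintype n] [DecidableEq n] [Fintype m] [DecidableEq m]
variable {R : Type*} [CommRing R]

lemma charpoly_conj (M P Q : Matrix n n R) (h1 : P * Q = 1) (h2 : Q * P = 1) :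
    (P * M * Q).charpoly = M.charpoly := by
  have hmap : ∀ A B : Matrix n n R, (A * B).map (C : R → R[X]) =
      A.map C * B.map C := fun A B => Matrix.map_mul
  have hPQ : P.map (C : R → R[X]) * Q.map C = 1 := by
    rw [← hmap, h1]; simp
  have hQP : Q.map (C : R → R[X]) * P.map C = 1 := by
    rw [← hmap, h2]; simp
  have hscalar : Matrix.scalar n (X : R[X]) = (X : R[X]) • (1 : Matrix n n R[X]) := by
    ext i j
    simp only [Matrix.scalar_apply, Matrix.smul_apply, Matrix.one_apply, Matrix.diagonal_apply,
      smul_eq_mul]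
    split <;> simp
  have key : charmatrix (P * M * Q) = P.map C * charmatrix M * Q.map C := by
    rw [charmatrix, charmatrix, mul_sub, sub_mul, hscalar]
    congr 1
    · rw [Matrix.mul_smul, Matrix.smul_mul, mul_one, hPQ]
    · show (RingHom.mapMatrix (C : R →+* R[X])) (P * M * Q) = _
      rw [_root_.map_mul, _root_.map_mul]; rfl
  unfold Matrix.charpoly
  rw [key, det_mul, det_mul, mul_comm, ← mul_assoc, ← det_mul, hQP, det_one, one_mul]

lemma charpoly_blockDiagonal (M : m → Matrix n n R) :
    (Matrix.blockDiagonal M).charpoly = ∏ k : m, (M k).charpoly := by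
  have key : charmatrix (Matrix.blockDiagonal M) =
      Matrix.blockDiagonal (fun k => charmatrix (M k)) := by
    ext ⟨i, x⟩ ⟨j, y⟩
    by_cases hxy : x = y
    · subst hxy
      by_cases hij : i = j
      · subst hij; simp [charmatrix_apply_eq, Matrix.blockDiagonal_apply]
      · rw [charmatrix_apply_ne _ _ _ (by simp [hij])]
        simp [Matrix.blockDiagonal_apply, charmatrix_apply_ne _ _ _ hij]
    · rw [charmatrix_apply_ne _ _ _ (by simp [hxy])]
      simp [Matrix.blockDiagonal_apply, hxy]
  unfold Matrix.charpoly
  rw [key, Matrix.det_blockDiagonal]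

lemma kron_one_eq_blockDiagonal (A : Matrix n n R) :
    (A ⊗ₖ (1 : Matrix m m R)) = Matrix.blockDiagonal (fun _ : m => A) := by
  ext ⟨i, x⟩ ⟨j, y⟩
  simp [Matrix.kroneckerMap_apply, Matrix.blockDiagonal_apply, Matrix.one_apply, mul_ite]

lemma eval_charpoly' (M : Matrix n n R) (μ : R) :
    M.charpoly.eval μ = (μ • (1 : Matrix n n R) - M).det := by
  unfold Matrix.charpoly
  rw [← Polynomial.coe_evalRingHom, RingHom.map_det]
  congr 1
  ext i j
  by_cases hij : i = j
  · subst hij; simp [charmatrix_apply_eq, Matrix.one_apply]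
  · simp [charmatrix_apply_ne _ _ _ hij, Matrix.one_apply, hij]


noncomputable def qpoly (N k : ℕ) : Polynomial ℂ := (1 + X) ^ k * (1 - X) ^ (N - k)

lemma deriv_a (k : ℕ) : derivative ((1 + X : ℂ[X]) ^ k) * (1 + X) = C (k : ℂ) * (1 + X) ^ k := by
  cases k with
  | zero => simp
  | succ k =>
    rw [derivative_pow]
    simp only [derivative_add, derivative_one, derivative_X, zero_add, mul_one,
      Nat.succ_sub_one]
    rw [mul_assoc, ← pow_succ]
  
lemma deriv_b (m : ℕ) : derivative ((1 - X : ℂ[X]) ^ m) * (1 - X) = -(C (m : ℂ) * (1 - X) ^ m) := by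
  cases m with
  | zero => simp
  | succ m =>
    rw [derivative_pow]
    simp only [derivative_sub, derivative_one, derivative_X, zero_sub, Nat.succ_sub_one]
    rw [pow_succ]
    ring

lemma key_poly (N k : ℕ) (hk : k ≤ N) :
    derivative (qpoly N k) * (1 - X ^ 2) + C (N : ℂ) * (qpoly N k * X) =
      C (2 * (k : ℂ) - N) * qpoly N k := by
  have hm : ((N - k : ℕ) : ℂ) = (N : ℂ) - k := by
    push_cast [hk]; ring
  unfold qpoly
  rw [derivative_mul]
  have hfact : (1 - X ^ 2 : ℂ[X]) = (1 + X) * (1 - X) := by ring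
  rw [hfact]
  have h1 := deriv_a k
  have h2 := deriv_b (N - k)
  rw [hm] at h2
  have expand : (derivative ((1 + X:ℂ[X]) ^ k) * (1 - X) ^ (N - k) +
      (1 + X) ^ k * derivative ((1 - X:ℂ[X]) ^ (N - k))) * ((1 + X) * (1 - X)) =
      (derivative ((1 + X:ℂ[X]) ^ k) * (1 + X)) * ((1 - X) ^ (N - k) * (1 - X)) +
      (derivative ((1 - X:ℂ[X]) ^ (N - k)) * (1 - X)) * ((1 + X) ^ k * (1 + X)) := by ring
  rw [expand, h1, h2]
  have hC : C (2 * (k:ℂ) - N) = 2 * C (k:ℂ) - C (N:ℂ) := by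
    rw [map_sub, C_mul, map_ofNat]
  have hC2 : C ((N:ℂ) - k) = C (N:ℂ) - C (k:ℂ) := by rw [map_sub]
  rw [hC, hC2]
  ring

lemma natDegree_qpoly (N k : ℕ) (hk : k ≤ N) : (qpoly N k).natDegree = N := by
  unfold qpoly
  have ha : (1 + X : ℂ[X]) = X + C 1 := by simp [add_comm]
  have hb : (1 - X : ℂ[X]).natDegree = 1 := by
    have : (1 - X : ℂ[X]) = C (-1) * X + C 1 := by simp; ring
    rw [this]
    exact natDegree_linear (by norm_num)
  have hbne : (1 - X : ℂ[X]) ≠ 0 := fun h => by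
    have := congrArg natDegree h; rw [hb] at this; simp at this
  have hane : (1 + X : ℂ[X]) ≠ 0 := fun h => by
    have := congrArg natDegree h; rw [ha, natDegree_X_add_C] at this; simp at this
  rw [natDegree_mul (pow_ne_zero _ hane) (pow_ne_zero _ hbne), natDegree_pow, natDegree_pow,
    ha, natDegree_X_add_C, hb]
  omega

lemma coeff_qpoly_N (N k : ℕ) (hk : k ≤ N) : (qpoly N k).coeff N = (-1) ^ (N - k) := by
  have ha : (1 + X : ℂ[X]) = X + C 1 := by simp [add_comm]
  have hma : ((1 + X : ℂ[X]) ^ k).Monic := by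
    rw [ha]; exact (monic_X_add_C 1).pow k
  have hlc : ((1 - X : ℂ[X]) ^ (N - k)).leadingCoeff = (-1) ^ (N - k) := by
    rw [leadingCoeff_pow]
    have : (1 - X : ℂ[X]) = C (-1) * X + C 1 := by simp; ring
    rw [this, leadingCoeff_linear (by norm_num)]
  have hdeg := natDegree_qpoly N k hk
  have := leadingCoeff_mul ((1 + X : ℂ[X]) ^ k) ((1 - X) ^ (N - k))
  rw [hma.leadingCoeff, one_mul, hlc] at this
  calc (qpoly N k).coeff N = (qpoly N k).leadingCoeff := by rw [leadingCoeff, hdeg]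
    _ = (-1) ^ (N - k) := this

lemma coeff_rec (N k : ℕ) (hk : k ≤ N) (n : ℕ) :
    ((n : ℂ) + 1) * (qpoly N k).coeff (n + 1) +
      ((N : ℂ) - n + 1) * (if n = 0 then 0 else (qpoly N k).coeff (n - 1)) =
      (2 * (k : ℂ) - N) * (qpoly N k).coeff n := by
  have h := congrArg (fun p => Polynomial.coeff p n) (key_poly N k hk)
  set q := qpoly N k
  have hL : (derivative q * (1 - X ^ 2) + C (N : ℂ) * (q * X)).coeff n =
      ((n:ℂ) + 1) * q.coeff (n+1) - (if 2 ≤ n then ((n-1:ℕ):ℂ) * q.coeff (n-1) else 0)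
        + (N:ℂ) * (if 1 ≤ n then q.coeff (n-1) else 0) := by
    rw [coeff_add, coeff_C_mul]
    have e1 : (derivative q * (1 - X^2)).coeff n =
        (derivative q).coeff n - (derivative q * X^2).coeff n := by
      rw [mul_sub, coeff_sub, mul_one]
    rw [e1, coeff_mul_X_pow', coeff_derivative]
    have e2 : (q * X).coeff n = if 1 ≤ n then q.coeff (n-1) else 0 := by
      rcases n with _ | n
      · simp
      · simp [coeff_mul_X]
    rw [e2]
    congr 1
    congr 1
    · push_cast; ring
    · by_cases h2 : 2 ≤ n
      · rw [if_pos h2, if_pos h2, coeff_derivative]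
        have : n - 2 + 1 = n - 1 := by omega
        rw [this]
        have : ((n - 2 : ℕ) : ℂ) + 1 = ((n - 1 : ℕ) : ℂ) := by
          have : n - 2 + 1 = n - 1 := by omega
          rw [← this]; push_cast; ring
        rw [mul_comm]
        rw [this]
      · rw [if_neg h2, if_neg h2]
  rw [coeff_C_mul] at h
  rw [hL] at h
  rcases n with _ | n
  · simpa using h
  · rcases n with _ | n
    · simp only [if_neg (by norm_num : ¬ (2 ≤ 1)), if_pos (by norm_num : 1 ≤ 1)] at h
      simp only [if_neg (Nat.one_ne_zero)]
      push_cast at h ⊢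
      linear_combination h
    · simp only [if_pos (by omega : 2 ≤ n + 2), if_pos (by omega : 1 ≤ n + 2)] at h
      simp only [if_neg (Nat.succ_ne_zero _)]
      have hc : ((n + 2 - 1 : ℕ) : ℂ) = (n : ℂ) + 1 := by
        norm_num
      rw [hc] at h
      push_cast at h ⊢
      linear_combination h

open Matrix

noncomputable def Tmat (N : ℕ) : Matrix (Fin (N + 1)) (Fin (N + 1)) ℂ :=
  ∑ i : Fin N, ((((N - (i : ℕ) : ℕ)) : ℂ) • Matrix.single i.succ i.castSucc (1 : ℂ) +
    (((i : ℕ) + 1 : ℂ)) • Matrix.single i.castSucc i.succ (1 : ℂ))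

noncomputable def vvec (N k : ℕ) : Fin (N + 1) → ℂ := fun j => (qpoly N k).coeff j

lemma sum_mulVec {n m : Type*} [Fintype n] [Fintype m] (f : m → Matrix n n ℂ) (w : n → ℂ) :
    (∑ i, f i).mulVec w = ∑ i, (f i).mulVec w := by
  ext j
  simp only [Matrix.mulVec, dotProduct, Matrix.sum_apply, Finset.sum_mul,
    Finset.sum_apply]
  rw [Finset.sum_comm]

lemma Tmat_mulVec_vvec (N k : ℕ) (hk : k ≤ N) :
    (Tmat N).mulVec (vvec N k) = (2 * (k : ℂ) - N) • vvec N k := by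
  ext j
  rw [Tmat, _root_.sum_mulVec]
  simp only [Finset.sum_apply, Pi.smul_apply, add_mulVec, smul_mulVec,
    single_mulVec, Pi.add_apply, one_mul, smul_eq_mul]
  have hterm : ∀ i : Fin N,
      ((((N - (i : ℕ) : ℕ)) : ℂ) * (Function.update (0 : Fin (N+1) → ℂ) i.succ (vvec N k i.castSucc)) j) +
      ((((i : ℕ) + 1 : ℂ)) * (Function.update (0 : Fin (N+1) → ℂ) i.castSucc (vvec N k i.succ)) j) =
      (if j = i.succ then (((N - (i : ℕ) : ℕ)) : ℂ) * vvec N k i.castSucc else 0) +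
      (if j = i.castSucc then (((i : ℕ) + 1 : ℂ)) * vvec N k i.succ else 0) := by
    intro i
    congr 1 <;> rw [Function.update_apply] <;> split <;> simp_all
  rw [Finset.sum_congr rfl (fun i _ => hterm i), Finset.sum_add_distrib]
  have hsum1 : (∑ i : Fin N, if j = i.succ then (((N - (i : ℕ) : ℕ)) : ℂ) * vvec N k i.castSucc else 0) =
      ((N : ℂ) - (j : ℕ) + 1) * (if (j : ℕ) = 0 then 0 else (qpoly N k).coeff ((j : ℕ) - 1)) := by
    rcases Fin.eq_zero_or_eq_succ j with rfl | ⟨i0, rfl⟩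
    · rw [Finset.sum_eq_zero (fun i _ => if_neg (by simp [Fin.ext_iff]))]
      simp
    · rw [Finset.sum_eq_single i0]
      · rw [if_pos rfl, if_neg (by simp [Fin.ext_iff])]
        have h3 : (((N - (i0 : ℕ) : ℕ)) : ℂ) = (N : ℂ) - (i0 : ℕ) := by
          have : (i0 : ℕ) ≤ N := le_of_lt i0.isLt
          push_cast [this]; ring
        rw [vvec, h3]
        simp only [Fin.coe_castSucc, Fin.val_succ, Nat.add_sub_cancel]
        push_cast
        ring
      · intro i _ hne
        rw [if_neg (fun hcon => hne (Fin.succ_injective _ hcon.symm))]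
      · intro h; exact absurd (Finset.mem_univ i0) h
  have hsum2 : (∑ i : Fin N, if j = i.castSucc then (((i : ℕ) + 1 : ℂ)) * vvec N k i.succ else 0) =
      ((j : ℕ) + 1 : ℂ) * (qpoly N k).coeff ((j : ℕ) + 1) := by
    rcases Fin.eq_castSucc_or_eq_last j with ⟨i0, rfl⟩ | rfl
    · rw [Finset.sum_eq_single i0]
      · rw [if_pos rfl, vvec]
        simp
      · intro i _ hne
        rw [if_neg (fun hcon => hne (Fin.castSucc_injective _ hcon.symm))]
      · intro h; exact absurd (Finset.mem_univ i0) h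
    · rw [Finset.sum_eq_zero (fun i _ => if_neg (by
        intro hcon
        have := congrArg (fun x : Fin (N+1) => (x : ℕ)) hcon
        simp at this
        omega))]
      rw [Fin.val_last,
        coeff_eq_zero_of_natDegree_lt (by rw [natDegree_qpoly N k hk]; omega), mul_zero]
  rw [hsum1, hsum2, add_comm]
  have hrec := coeff_rec N k hk (j : ℕ)
  show _ = (2 * (k:ℂ) - N) * vvec N k j
  rw [vvec]
  exact hrec

lemma eval_charpoly'' {n : Type*} [Fintype n] [DecidableEq n] (M : Matrix n n ℂ) (μ : ℂ) :
    M.charpoly.eval μ = (μ • (1 : Matrix n n ℂ) - M).det := by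
  unfold Matrix.charpoly
  rw [← Polynomial.coe_evalRingHom, RingHom.map_det]
  congr 1
  ext i j
  by_cases hij : i = j
  · subst hij; simp [charmatrix_apply_eq, Matrix.one_apply]
  · simp [charmatrix_apply_ne _ _ _ hij, Matrix.one_apply, hij]

lemma vvec_ne_zero (N k : ℕ) (hk : k ≤ N) : vvec N k ≠ 0 := by
  intro h
  have h2 := congrFun h ⟨N, Nat.lt_succ_self N⟩
  rw [vvec] at h2
  simp only [Pi.zero_apply] at h2
  rw [coeff_qpoly_N N k hk] at h2
  exact pow_ne_zero _ (by norm_num : (-1 : ℂ) ≠ 0) h2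

lemma isRoot_charpoly_Tmat (N k : ℕ) (hk : k ≤ N) :
    ((Tmat N).charpoly).IsRoot (2 * (k : ℂ) - N) := by
  rw [IsRoot.def, eval_charpoly'']
  rw [← Matrix.exists_mulVec_eq_zero_iff]
  refine ⟨vvec N k, vvec_ne_zero N k hk, ?_⟩
  rw [Matrix.sub_mulVec, Matrix.smul_mulVec, Matrix.one_mulVec, Tmat_mulVec_vvec N k hk,
    sub_self]

lemma charpoly_Tmat (N : ℕ) :
    (Tmat N).charpoly = ∏ k ∈ Finset.range (N + 1), (X - C (2 * (k : ℂ) - N)) := by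
  set p := (Tmat N).charpoly with hp
  have hmonic : p.Monic := Matrix.charpoly_monic _
  have hdeg : p.natDegree = N + 1 := by
    rw [hp, Matrix.charpoly_natDegree_eq_dim, Fintype.card_fin]
  have hp0 : p ≠ 0 := hmonic.ne_zero
  set f : ℕ → ℂ := fun k => 2 * (k : ℂ) - N with hf
  set ms : Multiset ℂ := (Multiset.range (N + 1)).map f with hms
  have hinj : Function.Injective f := by
    intro a b hab
    rw [hf] at hab
    simp only at hab
    have : (a : ℂ) = b := by linear_combination hab / 2
    exact_mod_cast this
  have hnodup : ms.Nodup := (Multiset.nodup_range _).map hinj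
  have hle : ms ≤ p.roots := by
    rw [Multiset.le_iff_count]
    intro a
    by_cases ha : a ∈ ms
    · rw [Multiset.count_eq_one_of_mem hnodup ha, Multiset.one_le_count_iff_mem]
      obtain ⟨k, hk, rfl⟩ := Multiset.mem_map.mp ha
      rw [Polynomial.mem_roots hp0]
      exact isRoot_charpoly_Tmat N k (by
        have := Multiset.mem_range.mp hk; omega)
    · rw [Multiset.count_eq_zero_of_notMem ha]
      exact Nat.zero_le _
  have hcard : p.roots.card ≤ ms.card := by
    rw [hms, Multiset.card_map, Multiset.card_range]
    calc p.roots.card ≤ p.natDegree := p.card_roots'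
      _ = N + 1 := hdeg
  have hroots : p.roots = ms := (Multiset.eq_of_le_of_card_le hle hcard).symm
  have hsplit := (IsAlgClosed.splits p).eq_prod_roots_of_monic hmonic
  rw [hroots, hms, Multiset.map_map] at hsplit
  rw [hsplit]
  rfl

open Kronecker

noncomputable def Amat (N : ℕ) : Matrix (Fin (N + 1)) (Fin (N + 1)) ℂ :=
  ∑ j : Fin N, (Real.sqrt ((((j : ℕ) + 1) * (N - (j : ℕ)) : ℕ)) : ℂ) •
    (Matrix.single j.succ j.castSucc (1 : ℂ) + Matrix.single j.castSucc j.succ (1 : ℂ))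

lemma diag_mul_std {n : Type*} [Fintype n] [DecidableEq n] (d : n → ℂ) (a b : n) :
    Matrix.diagonal d * Matrix.single a b (1 : ℂ) = d a • Matrix.single a b (1 : ℂ) := by
  ext i j
  rw [Matrix.diagonal_mul]
  simp only [Matrix.smul_apply, smul_eq_mul]
  rcases eq_or_ne a i with rfl | h
  · rfl
  · have hne : ¬(a = i ∧ b = j) := fun hc => h hc.1
    rw [Matrix.single_apply_of_ne (h := hne), mul_zero, mul_zero]

lemma std_mul_diag {n : Type*} [Fintype n] [DecidableEq n] (d : n → ℂ) (a b : n) :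
    Matrix.single a b (1 : ℂ) * Matrix.diagonal d = d b • Matrix.single a b (1 : ℂ) := by
  ext i j
  rw [Matrix.mul_diagonal]
  simp only [Matrix.smul_apply, smul_eq_mul]
  rcases eq_or_ne b j with rfl | h
  · rw [mul_comm]
  · have hne : ¬(a = i ∧ b = j) := fun hc => h hc.2
    rw [Matrix.single_apply_of_ne (h := hne), zero_mul, mul_zero]

lemma sqrt_key1 (N j : ℕ) (hj : j < N) :
    (Real.sqrt ((((j : ℕ) + 1) * (N - j) : ℕ)) : ℂ) * (Real.sqrt (N.choose (j + 1)) : ℂ) =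
      ((N - j : ℕ) : ℂ) * (Real.sqrt (N.choose j) : ℂ) := by
  rw [← Complex.ofReal_mul, ← Complex.ofReal_natCast (N - j), ← Complex.ofReal_mul]
  congr 1
  rw [← Real.sqrt_mul (by positivity)]
  have hnn : (0 : ℝ) ≤ ((N - j : ℕ) : ℝ) := Nat.cast_nonneg _
  rw [show ((N - j : ℕ) : ℝ) * Real.sqrt (N.choose j) =
      Real.sqrt ((((N - j) ^ 2 * N.choose j : ℕ)) : ℝ) by
    push_cast
    rw [Real.sqrt_mul (by positivity), Real.sqrt_sq hnn]]
  congr 1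
  have h := Nat.choose_succ_right_eq N j
  have hnat : ((j + 1) * (N - j)) * N.choose (j + 1) = (N - j) ^ 2 * N.choose j := by
    calc ((j + 1) * (N - j)) * N.choose (j + 1) = (N - j) * (N.choose (j + 1) * (j + 1)) := by ring
      _ = (N - j) * (N.choose j * (N - j)) := by rw [h]
      _ = (N - j) ^ 2 * N.choose j := by ring
  exact_mod_cast congrArg (Nat.cast : ℕ → ℝ) hnat

lemma sqrt_key2 (N j : ℕ) (hj : j < N) :
    (Real.sqrt ((((j : ℕ) + 1) * (N - j) : ℕ)) : ℂ) * (Real.sqrt (N.choose j) : ℂ) =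
      ((j : ℕ) + 1 : ℂ) * (Real.sqrt (N.choose (j + 1)) : ℂ) := by
  rw [← Complex.ofReal_mul, show ((j : ℕ) + 1 : ℂ) = (((j + 1 : ℕ) : ℝ) : ℂ) by push_cast; ring,
    ← Complex.ofReal_mul]
  congr 1
  rw [← Real.sqrt_mul (by positivity)]
  rw [show (((j + 1 : ℕ)) : ℝ) * Real.sqrt (N.choose (j + 1)) =
      Real.sqrt ((((j + 1) ^ 2 * N.choose (j + 1) : ℕ)) : ℝ) by
    push_cast
    rw [Real.sqrt_mul (by positivity), Real.sqrt_sq (by positivity)]]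
  congr 1
  have h := Nat.choose_succ_right_eq N j
  have hnat : ((j + 1) * (N - j)) * N.choose j = (j + 1) ^ 2 * N.choose (j + 1) := by
    calc ((j + 1) * (N - j)) * N.choose j = (j + 1) * (N.choose j * (N - j)) := by ring
      _ = (j + 1) * (N.choose (j + 1) * (j + 1)) := by rw [← h]
      _ = (j + 1) ^ 2 * N.choose (j + 1) := by ring
  exact_mod_cast congrArg (Nat.cast : ℕ → ℝ) hnat

lemma charpoly_Amat (N : ℕ) : (Amat N).charpoly = (Tmat N).charpoly := by
  set dfun : Fin (N + 1) → ℂ := fun j => (Real.sqrt (N.choose j) : ℂ) with hdfun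
  set efun : Fin (N + 1) → ℂ := fun j => ((Real.sqrt (N.choose j) : ℂ))⁻¹ with hefun
  have hd : ∀ j : Fin (N + 1), dfun j ≠ 0 := by
    intro j
    have hpos : 0 < N.choose j := Nat.choose_pos (Nat.lt_succ_iff.mp j.isLt)
    simp only [hdfun, ne_eq, Complex.ofReal_eq_zero]
    positivity
  have hED : Matrix.diagonal efun * Matrix.diagonal dfun = 1 := by
    rw [Matrix.diagonal_mul_diagonal,
      show (fun i => efun i * dfun i) = fun _ => (1 : ℂ) from
        funext fun j => inv_mul_cancel₀ (hd j), Matrix.diagonal_one]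
  have hDE : Matrix.diagonal dfun * Matrix.diagonal efun = 1 := by
    rw [Matrix.diagonal_mul_diagonal,
      show (fun i => dfun i * efun i) = fun _ => (1 : ℂ) from
        funext fun j => mul_inv_cancel₀ (hd j), Matrix.diagonal_one]
  have hcomm : Matrix.diagonal dfun * Amat N = Tmat N * Matrix.diagonal dfun := by
    rw [Amat, Tmat, Finset.mul_sum, Finset.sum_mul]
    refine Finset.sum_congr rfl fun j _ => ?_
    rw [mul_smul_comm, mul_add, diag_mul_std, diag_mul_std, smul_add, smul_smul, smul_smul,
      Matrix.add_mul, Matrix.smul_mul, Matrix.smul_mul, std_mul_diag, std_mul_diag,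
      smul_smul, smul_smul]
    have h1 : (Real.sqrt ((((j : ℕ) + 1) * (N - (j : ℕ)) : ℕ)) : ℂ) * dfun j.succ =
        (((N - (j : ℕ) : ℕ)) : ℂ) * dfun j.castSucc := by
      simp only [hdfun, Fin.val_succ, Fin.coe_castSucc]
      exact sqrt_key1 N j j.isLt
    have h2 : (Real.sqrt ((((j : ℕ) + 1) * (N - (j : ℕ)) : ℕ)) : ℂ) * dfun j.castSucc =
        (((j : ℕ) + 1 : ℂ)) * dfun j.succ := by
      simp only [hdfun, Fin.val_succ, Fin.coe_castSucc]
      exact sqrt_key2 N j j.isLt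
    rw [h1, h2]
  have hA : Amat N = Matrix.diagonal efun * Tmat N * Matrix.diagonal dfun := by
    have := congrArg (fun M => Matrix.diagonal efun * M) hcomm
    simp only [← mul_assoc, hED, one_mul] at this
    rw [this]
  rw [hA]
  exact charpoly_conj (Tmat N) _ _ hED hDE

noncomputable def clockHam' (N d : ℕ) (U : Fin N → Matrix (Fin d) (Fin d) ℂ) :
    Matrix (Fin (N + 1) × Fin d) (Fin (N + 1) × Fin d) ℂ :=
  ∑ j : Fin N, (Real.sqrt ((((j : ℕ) + 1) * (N - (j : ℕ)) : ℕ)) : ℂ) •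
    ((Matrix.single j.succ j.castSucc (1 : ℂ)) ⊗ₖ U j +
      (Matrix.single j.castSucc j.succ (1 : ℂ)) ⊗ₖ (U j)ᴴ)

noncomputable def Vm (N d : ℕ) (U : Fin N → Matrix (Fin d) (Fin d) ℂ) :
    ℕ → Matrix (Fin d) (Fin d) ℂ
  | 0 => 1
  | (i + 1) => (if h : i < N then U ⟨i, h⟩ else 1) * Vm N d U i

variable {N d : ℕ} {U : Fin N → Matrix (Fin d) (Fin d) ℂ}

lemma Vm_mem (hU : ∀ j, U j ∈ Matrix.unitaryGroup (Fin d) ℂ) (i : ℕ) :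
    Vm N d U i ∈ Matrix.unitaryGroup (Fin d) ℂ := by
  induction i with
  | zero => exact one_mem _
  | succ i ih =>
    rw [Vm]
    refine mul_mem ?_ ih
    split_ifs with h
    · exact hU _
    · exact one_mem _

noncomputable def Wmat (N d : ℕ) (U : Fin N → Matrix (Fin d) (Fin d) ℂ) :
    Matrix (Fin (N + 1) × Fin d) (Fin (N + 1) × Fin d) ℂ :=
  ∑ i : Fin (N + 1), Matrix.single i i (1 : ℂ) ⊗ₖ Vm N d U (i : ℕ)

noncomputable def Wmat' (N d : ℕ) (U : Fin N → Matrix (Fin d) (Fin d) ℂ) :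
    Matrix (Fin (N + 1) × Fin d) (Fin (N + 1) × Fin d) ℂ :=
  ∑ i : Fin (N + 1), Matrix.single i i (1 : ℂ) ⊗ₖ (Vm N d U (i : ℕ))ᴴ

lemma sum_std_diag {n : Type*} [Fintype n] [DecidableEq n] :
    (∑ i : n, Matrix.single i i (1 : ℂ)) = 1 := by
  ext a b
  rw [Matrix.sum_apply]
  rcases eq_or_ne a b with rfl | h
  · rw [Finset.sum_eq_single a]
    · simp
    · intro i _ hne
      exact Matrix.single_apply_of_ne (c := (1 : ℂ)) (h := fun (hc : i = a ∧ i = a) => hne hc.1)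
    · intro hc; exact absurd (Finset.mem_univ a) hc
  · rw [Finset.sum_eq_zero, Matrix.one_apply_ne h]
    intro i _
    apply Matrix.single_apply_of_ne
    rintro ⟨rfl, rfl⟩
    exact h rfl

lemma sum_kron {ι : Type*} (s : Finset ι) (f : ι → Matrix (Fin (N + 1)) (Fin (N + 1)) ℂ)
    (B : Matrix (Fin d) (Fin d) ℂ) :
    (∑ i ∈ s, f i) ⊗ₖ B = ∑ i ∈ s, (f i) ⊗ₖ B := by
  ext ⟨i, x⟩ ⟨j, y⟩
  simp [Matrix.kroneckerMap_apply, Matrix.sum_apply, Finset.sum_mul]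

lemma W_mul_W' (hU : ∀ j, U j ∈ Matrix.unitaryGroup (Fin d) ℂ) :
    Wmat N d U * Wmat' N d U = 1 := by
  rw [Wmat, Wmat', Finset.sum_mul_sum]
  have hterm : ∀ i : Fin (N + 1),
      (∑ j : Fin (N + 1), (Matrix.single i i (1 : ℂ) ⊗ₖ Vm N d U (i : ℕ)) *
        (Matrix.single j j (1 : ℂ) ⊗ₖ (Vm N d U (j : ℕ))ᴴ)) =
      Matrix.single i i (1 : ℂ) ⊗ₖ (1 : Matrix (Fin d) (Fin d) ℂ) := by
    intro i
    rw [Finset.sum_eq_single i]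
    · rw [← Matrix.mul_kronecker_mul, Matrix.single_mul_single_same, one_mul]
      congr 1
      have h := Vm_mem hU (i : ℕ)
      rw [Matrix.mem_unitaryGroup_iff] at h
      rw [← Matrix.star_eq_conjTranspose, h]
    · intro j _ hne
      rw [← Matrix.mul_kronecker_mul, Matrix.single_mul_single_of_ne (h := hne.symm),
        Matrix.zero_kronecker]
    · intro hc; exact absurd (Finset.mem_univ i) hc
  rw [Finset.sum_congr rfl (fun i _ => hterm i), ← sum_kron, sum_std_diag,
    Matrix.one_kronecker_one]

lemma W'_mul_W (hU : ∀ j, U j ∈ Matrix.unitaryGroup (Fin d) ℂ) :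
    Wmat' N d U * Wmat N d U = 1 := by
  rw [Wmat, Wmat', Finset.sum_mul_sum]
  have hterm : ∀ i : Fin (N + 1),
      (∑ j : Fin (N + 1), (Matrix.single i i (1 : ℂ) ⊗ₖ (Vm N d U (i : ℕ))ᴴ) *
        (Matrix.single j j (1 : ℂ) ⊗ₖ Vm N d U (j : ℕ))) =
      Matrix.single i i (1 : ℂ) ⊗ₖ (1 : Matrix (Fin d) (Fin d) ℂ) := by
    intro i
    rw [Finset.sum_eq_single i]
    · rw [← Matrix.mul_kronecker_mul, Matrix.single_mul_single_same, one_mul]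
      congr 1
      have h := Vm_mem hU (i : ℕ)
      rw [Matrix.mem_unitaryGroup_iff'] at h
      rw [← Matrix.star_eq_conjTranspose, h]
    · intro j _ hne
      rw [← Matrix.mul_kronecker_mul, Matrix.single_mul_single_of_ne (h := hne.symm),
        Matrix.zero_kronecker]
    · intro hc; exact absurd (Finset.mem_univ i) hc
  rw [Finset.sum_congr rfl (fun i _ => hterm i), ← sum_kron, sum_std_diag,
    Matrix.one_kronecker_one]

lemma key_left (a b : Fin (N + 1)) (M : Matrix (Fin d) (Fin d) ℂ) :
    Wmat N d U * (Matrix.single a b (1 : ℂ) ⊗ₖ M) =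
      Matrix.single a b (1 : ℂ) ⊗ₖ (Vm N d U (a : ℕ) * M) := by
  rw [Wmat, Finset.sum_mul, Finset.sum_eq_single a]
  · rw [← Matrix.mul_kronecker_mul, Matrix.single_mul_single_same, one_mul]
  · intro j _ hne
    rw [← Matrix.mul_kronecker_mul, Matrix.single_mul_single_of_ne (h := hne),
      Matrix.zero_kronecker]
  · intro hc; exact absurd (Finset.mem_univ a) hc

lemma key_right (a b : Fin (N + 1)) (M : Matrix (Fin d) (Fin d) ℂ) :
    (Matrix.single a b (1 : ℂ) ⊗ₖ M) * Wmat N d U =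
      Matrix.single a b (1 : ℂ) ⊗ₖ (M * Vm N d U (b : ℕ)) := by
  rw [Wmat, Finset.mul_sum, Finset.sum_eq_single b]
  · rw [← Matrix.mul_kronecker_mul, Matrix.single_mul_single_same, mul_one]
  · intro j _ hne
    rw [← Matrix.mul_kronecker_mul, Matrix.single_mul_single_of_ne (h := hne.symm),
      Matrix.zero_kronecker]
  · intro hc; exact absurd (Finset.mem_univ b) hc

lemma clock_conj (hU : ∀ j, U j ∈ Matrix.unitaryGroup (Fin d) ℂ) :
    clockHam' N d U * Wmat N d U =
      Wmat N d U * (Amat N ⊗ₖ (1 : Matrix (Fin d) (Fin d) ℂ)) := by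
  rw [clockHam', Amat, sum_kron, Finset.sum_mul, Finset.mul_sum]
  refine Finset.sum_congr rfl fun j _ => ?_
  have hV1 : U j * Vm N d U ((j.castSucc : Fin (N + 1)) : ℕ) =
      Vm N d U ((j.succ : Fin (N + 1)) : ℕ) := by
    rw [Fin.val_succ, Fin.coe_castSucc, Vm, dif_pos j.isLt, Fin.eta]
  have hV2 : (U j)ᴴ * Vm N d U ((j.succ : Fin (N + 1)) : ℕ) =
      Vm N d U ((j.castSucc : Fin (N + 1)) : ℕ) := by
    rw [← hV1, ← mul_assoc, ← Matrix.star_eq_conjTranspose,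
      Matrix.mem_unitaryGroup_iff'.mp (hU j), one_mul]
  rw [Matrix.smul_kronecker, mul_smul_comm, Matrix.smul_mul, Matrix.add_kronecker,
    mul_add, Matrix.add_mul, key_left, key_left, key_right, key_right, hV1, hV2,
    mul_one, mul_one]

theorem clockHam_eigenvalues'' (hU : ∀ j, U j ∈ Matrix.unitaryGroup (Fin d) ℂ) :
    (clockHam' N d U).charpoly =
      ∏ k ∈ Finset.range (N + 1), (X - C ((N : ℂ) - 2 * (k : ℂ))) ^ d := by
  have hWW := W_mul_W' hU
  have hW'W := W'_mul_W hU
  have hconj : clockHam' N d U =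
      Wmat N d U * (Amat N ⊗ₖ (1 : Matrix (Fin d) (Fin d) ℂ)) * Wmat' N d U := by
    calc clockHam' N d U = clockHam' N d U * (Wmat N d U * Wmat' N d U) := by
          rw [hWW, mul_one]
      _ = (clockHam' N d U * Wmat N d U) * Wmat' N d U := by rw [mul_assoc]
      _ = Wmat N d U * (Amat N ⊗ₖ (1 : Matrix (Fin d) (Fin d) ℂ)) * Wmat' N d U := by
          rw [clock_conj hU]
  have hprod : (∏ k ∈ Finset.range (N + 1), (X - C (2 * (k : ℂ) - N))) =
      ∏ k ∈ Finset.range (N + 1), (X - C ((N : ℂ) - 2 * k)) := by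
    rw [← Finset.prod_range_reflect (fun k => X - C (2 * (k : ℂ) - N)) (N + 1)]
    refine Finset.prod_congr rfl fun x hx => ?_
    have hx' : x ≤ N := Nat.lt_succ_iff.mp (Finset.mem_range.mp hx)
    have h1 : N + 1 - 1 - x = N - x := by omega
    rw [h1, Nat.cast_sub hx']
    have h2 : 2 * ((N : ℂ) - x) - N = N - 2 * x := by ring
    rw [h2]
  rw [hconj, charpoly_conj _ _ _ hWW hW'W, kron_one_eq_blockDiagonal, charpoly_blockDiagonal,
    Finset.prod_const, Finset.card_univ, Fintype.card_fin, charpoly_Amat, charpoly_Tmat,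
    hprod, Finset.prod_pow]


/-- The eigenvalues of the Feynman clock Hamiltonian, counted with multiplicity, are
exactly the numbers `N − 2k`, `k = 0, …, N`, each with multiplicity `d` (expressed via
the characteristic polynomial). -/
theorem clockHam_eigenvalues (N d : ℕ) (U : Fin N → Matrix (Fin d) (Fin d) ℂ)
    (hU : ∀ j, U j ∈ Matrix.unitaryGroup (Fin d) ℂ) :
    (clockHam N d U).charpoly =
      ∏ k ∈ Finset.range (N + 1), (X - C ((N : ℂ) - 2 * (k : ℂ))) ^ d := by
  have h : clockHam N d U = clockHam' N d U := rfl
  rw [h]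
  exact clockHam_eigenvalues'' hU
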